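/- For all integers p ≥ 1 and n ≥ 1, A(p,n,1) = (n−1)! · B(p,n). -/

import Mathlib

open Finset

/-- card of a finite type as sum of fiber cards. -/
lemma card_eq_sum_fibers {α β : Type*} [Finite α] [Fintype β] (f : α → β) :
    Nat.card α = ∑ b : β, Nat.card {a // f a = b} := by
  classical
  have _i : Fintype α := Fintype.ofFinite α
  rw [← Nat.card_congr (Equiv.sigmaFiberEquiv f), Nat.card_eq_fintype_card, Fintype.card_sigma]
  simp [Nat.card_eq_fintype_card]

/-- number of bijections with one prescribed value -/
lemma card_perm_fix (m : ℕ) (x0 e : Fin (m + 1)) :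
    Nat.card {π : Equiv.Perm (Fin (m + 1)) // π x0 = e} = m.factorial := by
  classical
  have E1 : {π : Equiv.Perm (Fin (m + 1)) // π x0 = e} ≃
      {π : Equiv.Perm (Fin (m + 1)) // π 0 = 0} := by
    refine
      { toFun := fun π => ⟨(Equiv.swap (0 : Fin (m+1)) x0).trans (π.val.trans (Equiv.swap e 0)), ?_⟩
        invFun := fun π => ⟨(Equiv.swap (0 : Fin (m+1)) x0).trans (π.val.trans (Equiv.swap e 0)), ?_⟩
        left_inv := ?_, right_inv := ?_ }
    · simp [π.2]
    · simp [Equiv.swap_apply_left, π.2, Equiv.swap_apply_right]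
    · intro π; ext z; simp [Equiv.swap_apply_self]
    · intro π; ext z; simp [Equiv.swap_apply_self]
  have E2 : {π : Equiv.Perm (Fin (m + 1)) // π 0 = 0} ≃ Equiv.Perm (Fin m) := by
    refine
      { toFun := fun π => (Equiv.Perm.decomposeFin π.val).2
        invFun := fun s => ⟨Equiv.Perm.decomposeFin.symm (0, s), by
          simp [Equiv.Perm.decomposeFin_symm_apply_zero]⟩
        left_inv := ?_, right_inv := ?_ }
    · rintro ⟨π, hπ⟩
      have h1 : (Equiv.Perm.decomposeFin π).1 = π 0 := by
        conv_rhs => rw [← Equiv.Perm.decomposeFin.symm_apply_apply π]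
        rw [← Equiv.Perm.decomposeFin_symm_apply_zero (Equiv.Perm.decomposeFin π).1
          (Equiv.Perm.decomposeFin π).2]
      refine Subtype.ext ?_
      have : ((0 : Fin (m+1)), (Equiv.Perm.decomposeFin π).2) = Equiv.Perm.decomposeFin π := by
        rw [← h1] at hπ
        exact Prod.ext hπ.symm rfl
      simp [this]
    · intro s; simp
  rw [Nat.card_congr (E1.trans E2), Nat.card_eq_fintype_card, Fintype.card_perm, Fintype.card_fin]


open AddSubgroup

variable {q n : ℕ}

/-- the coordinatewise reduction hom. -/
def redHom (q n : ℕ) : (Fin q → ℤ) →+ (Fin q → ZMod n) where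
  toFun v i := (v i : ZMod n)
  map_zero' := by ext i; simp
  map_add' a b := by ext i; simp

lemma ker_redHom_le {L : AddSubgroup (Fin q → ℤ)} (hL : L.index ∣ n) (hn : n ≠ 0)
    (v : Fin q → ℤ) (hv : v ∈ (redHom q n).ker) : v ∈ L := by
  have hdvd : ∀ i, (n : ℤ) ∣ v i := by
    intro i
    have : ((v i : ZMod n) = 0) := congrFun (AddMonoidHom.mem_ker.mp hv) i
    exact (ZMod.intCast_zmod_eq_zero_iff_dvd _ _).mp this
  choose w hw using hdvd
  have hvw : v = (n : ℤ) • w := by funext i; simp [hw i, mul_comm]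
  obtain ⟨c, hc⟩ := hL
  have hLn : L.index • w ∈ L := L.nsmul_index_mem w
  have : (n : ℤ) • w = c • (L.index • w) := by
    rw [smul_smul, hc]; push_cast; rw [mul_comm]; norm_cast
  rw [hvw, this]
  exact L.nsmul_mem hLn c

lemma finite_subgroups_dvd (hn : n ≠ 0) :
    Finite {L : AddSubgroup (Fin q → ℤ) // L.index ∣ n} := by
  haveI : NeZero n := ⟨hn⟩
  have hinj : Function.Injective
      (fun L : {L : AddSubgroup (Fin q → ℤ) // L.index ∣ n} => L.val.map (redHom q n)) := by
    intro L1 L2 h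
    have key : ∀ L : {L : AddSubgroup (Fin q → ℤ) // L.index ∣ n},
        (L.val.map (redHom q n)).comap (redHom q n) = L.val := by
      intro L
      rw [AddSubgroup.comap_map_eq]
      refine le_antisymm (sup_le le_rfl ?_) le_sup_left
      intro v hv
      exact ker_redHom_le L.2 hn v hv
    have := congrArg (AddSubgroup.comap (redHom q n)) h
    rw [key L1, key L2] at this
    exact Subtype.ext this
  exact Finite.of_injective _ hinj

lemma finite_subgroups_eq (hn : n ≠ 0) :
    Finite {L : AddSubgroup (Fin q → ℤ) // L.index = n} := by
  have := finite_subgroups_dvd (q := q) hn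
  exact Finite.of_injective
    (fun L : {L : AddSubgroup (Fin q → ℤ) // L.index = n} =>
      (⟨L.val, by rw [L.2]⟩ : {L : AddSubgroup (Fin q → ℤ) // L.index ∣ n}))
    (fun a b h => Subtype.ext (congrArg (·.val) h))


open AddSubgroup

variable {q : ℕ}

/-- inclusion of ℤ^q into ℤ^{q+1} as first q coordinates. -/
def jmap (q : ℕ) : (Fin q → ℤ) →+ (Fin (q + 1) → ℤ) where
  toFun w := Fin.snoc w 0
  map_zero' := by
    funext i
    refine Fin.lastCases ?_ (fun i => ?_) i <;> simp [Fin.snoc_castSucc, Fin.snoc_last]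
  map_add' a b := by
    funext i
    refine Fin.lastCases ?_ (fun i => ?_) i <;>
      simp [Fin.snoc_castSucc, Fin.snoc_last, Pi.add_apply]

/-- last coordinate projection. -/
def pmap (q : ℕ) : (Fin (q + 1) → ℤ) →+ ℤ where
  toFun v := v (Fin.last q)
  map_zero' := rfl
  map_add' _ _ := rfl

/-- init projection (not a hom needed? we need it as plain function). -/
def rmap (q : ℕ) (v : Fin (q + 1) → ℤ) : Fin q → ℤ := Fin.init v

lemma pmap_jmap (w : Fin q → ℤ) : pmap q (jmap q w) = 0 := by
  simp [pmap, jmap, Fin.snoc_last]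

lemma jmap_rmap {v : Fin (q + 1) → ℤ} (hv : pmap q v = 0) : jmap q (rmap q v) = v := by
  have hlast : v (Fin.last q) = 0 := hv
  simp only [jmap, rmap, AddMonoidHom.coe_mk, ZeroHom.coe_mk]
  rw [← hlast, Fin.snoc_init_self]

lemma pmap_surjective (q : ℕ) : Function.Surjective (pmap q) := by
  intro t
  exact ⟨Fin.snoc 0 t, by simp [pmap, Fin.snoc_last]⟩

/-- Key index lemma: for L ≤ ℤ^{q+1}, index L = index (L ∩ ℤ^q) * |generator of π(L)| -/
lemma index_eq_comap_mul {L : AddSubgroup (Fin (q + 1) → ℤ)} {g : ℤ}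
    (hg : L.map (pmap q) = zmultiples g) :
    L.index = (L.comap (jmap q)).index * g.natAbs := by
  classical
  set K : AddSubgroup (Fin (q + 1) → ℤ) := (zmultiples g).comap (pmap q) with hK
  have hLK : L ≤ K := by
    intro l hl
    have : pmap q l ∈ L.map (pmap q) := AddSubgroup.mem_map_of_mem _ hl
    rw [hg] at this
    exact this
  have hKindex : K.index = g.natAbs := by
    rw [hK, AddSubgroup.index_comap_of_surjective _ (pmap_surjective q), Int.index_zmultiples]
  -- build the hom V → K ⧸ L.addSubgroupOf K
  let jK : (Fin q → ℤ) →+ K := (jmap q).codRestrict K (by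
    intro w
    simp only [hK, AddSubgroup.mem_comap, pmap_jmap]
    exact zero_mem _)
  let Ω : (Fin q → ℤ) →+ (K ⧸ L.addSubgroupOf K) :=
    (QuotientAddGroup.mk' (L.addSubgroupOf K)).comp jK
  have hker : Ω.ker = L.comap (jmap q) := by
    ext w
    simp only [Ω, AddMonoidHom.mem_ker, AddMonoidHom.comp_apply, QuotientAddGroup.mk'_apply,
      AddSubgroup.mem_comap]
    rw [QuotientAddGroup.eq_zero_iff]
    simp [AddSubgroup.mem_addSubgroupOf, jK, AddMonoidHom.codRestrict]
  have hsurj : Function.Surjective Ω := by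
    rintro x
    obtain ⟨⟨k, hk⟩, rfl⟩ := QuotientAddGroup.mk'_surjective (L.addSubgroupOf K) x
    have hpk : pmap q k ∈ L.map (pmap q) := by
      rw [hg]; exact hk
    obtain ⟨l, hl, hpl⟩ := hpk
    refine ⟨rmap q (k - l), ?_⟩
    have hp0 : pmap q (k - l) = 0 := by rw [map_sub, hpl, sub_self]
    have hjr : jmap q (rmap q (k - l)) = k - l := jmap_rmap hp0
    simp only [Ω, AddMonoidHom.comp_apply, QuotientAddGroup.mk'_apply]
    rw [QuotientAddGroup.eq]
    simp only [AddSubgroup.mem_addSubgroupOf, jK]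
    have : ((- (jK (rmap q (k - l))) + ⟨k, hk⟩ : K) : Fin (q+1) → ℤ) = -(k - l) + k := by
      simp only [AddSubgroup.coe_add, AddSubgroup.coe_neg, jK]
      show -(jmap q (rmap q (k - l))) + k = -(k - l) + k
      rw [hjr]
    rw [this]
    simpa using hl
  have hrel : L.relIndex K = (L.comap (jmap q)).index := by
    have hQ : ((Fin q → ℤ) ⧸ Ω.ker) ≃ (K ⧸ L.addSubgroupOf K) :=
      (QuotientAddGroup.quotientKerEquivOfSurjective Ω hsurj).toEquiv
    rw [← hker]
    unfold AddSubgroup.relIndex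
    rw [AddSubgroup.index_eq_card, AddSubgroup.index_eq_card]
    exact (Nat.card_congr hQ).symm
  rw [← AddSubgroup.relIndex_mul_index hLK, hrel, hKindex]

lemma pmap_snoc (x : Fin q → ℤ) (t : ℤ) : pmap q (Fin.snoc x t) = t := by
  simp [pmap, Fin.snoc_last]

lemma rmap_snoc (x : Fin q → ℤ) (t : ℤ) : rmap q (Fin.snoc x t) = x := by
  simp [rmap, Fin.init_snoc]

lemma snoc_add (a b : Fin q → ℤ) (c d : ℤ) :
    (Fin.snoc (a + b) (c + d) : Fin (q+1) → ℤ) = Fin.snoc a c + Fin.snoc b d := by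
  funext i
  refine Fin.lastCases ?_ (fun i => ?_) i <;>
    simp [Fin.snoc_castSucc, Fin.snoc_last, Pi.add_apply]

lemma snoc_eq_add_jmap (v : Fin (q+1) → ℤ) (m : Fin q → ℤ) :
    (Fin.snoc (rmap q v + m) (pmap q v) : Fin (q+1) → ℤ) = v + jmap q m := by
  funext i
  refine Fin.lastCases ?_ (fun i => ?_) i <;>
    simp [Fin.snoc_castSucc, Fin.snoc_last, Pi.add_apply, jmap, pmap, rmap, Fin.init]

/-- the subgroup built from M, x, e -/
def mkLat (M : AddSubgroup (Fin q → ℤ)) (x : Fin q → ℤ) (e : ℕ) :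
    AddSubgroup (Fin (q + 1) → ℤ) :=
  (M.map (jmap q)) ⊔ zmultiples (Fin.snoc x (e : ℤ))

lemma mem_mkLat_iff {M : AddSubgroup (Fin q → ℤ)} {x : Fin q → ℤ} {e : ℕ}
    {v : Fin (q+1) → ℤ} :
    v ∈ mkLat M x e ↔ ∃ m ∈ M, ∃ k : ℤ, jmap q m + k • (Fin.snoc x (e:ℤ) : Fin (q+1) → ℤ) = v := by
  unfold mkLat
  rw [AddSubgroup.mem_sup]
  constructor
  · rintro ⟨y, hy, z, hz, rfl⟩
    obtain ⟨m, hm, rfl⟩ := hy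
    obtain ⟨k, rfl⟩ := AddSubgroup.mem_zmultiples_iff.mp hz
    exact ⟨m, hm, k, rfl⟩
  · rintro ⟨m, hm, k, rfl⟩
    exact ⟨jmap q m, AddSubgroup.mem_map_of_mem _ hm, _,
      AddSubgroup.mem_zmultiples_iff.mpr ⟨k, rfl⟩, rfl⟩

lemma map_pmap_mkLat (M : AddSubgroup (Fin q → ℤ)) (x : Fin q → ℤ) (e : ℕ) :
    (mkLat M x e).map (pmap q) = zmultiples ((e : ℤ)) := by
  unfold mkLat
  rw [AddSubgroup.map_sup, AddMonoidHom.map_zmultiples, pmap_snoc]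
  have h1 : (M.map (jmap q)).map (pmap q) ≤ zmultiples ((e:ℤ)) := by
    rintro t ⟨v, hv, rfl⟩
    obtain ⟨m, hm, rfl⟩ := hv
    show pmap q (jmap q m) ∈ _
    have : pmap q (jmap q m) = 0 := by simp [pmap, jmap, Fin.snoc_last]
    rw [this]; exact zero_mem _
  exact sup_eq_right.mpr h1

lemma comap_jmap_mkLat {M : AddSubgroup (Fin q → ℤ)} {x : Fin q → ℤ} {e : ℕ} (he : e ≠ 0) :
    (mkLat M x e).comap (jmap q) = M := by
  ext w
  rw [AddSubgroup.mem_comap, mem_mkLat_iff]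
  constructor
  · rintro ⟨m, hm, k, hk⟩
    have hlast := congrFun hk (Fin.last q)
    have : (0 : ℤ) = k * e := by
      simpa [jmap, pmap, Fin.snoc_last, Pi.add_apply, Pi.smul_apply, smul_eq_mul] using hlast.symm
    have hk0 : k = 0 := by
      rcases mul_eq_zero.mp this.symm with h | h
      · exact h
      · exact absurd (by exact_mod_cast h) he
    rw [hk0, zero_smul, add_zero] at hk
    have : w = m := by
      funext i
      have := congrFun hk i.castSucc
      simpa [jmap, Fin.snoc_castSucc] using this.symm
    rwa [this]
  · intro hw
    exact ⟨w, hw, 0, by rw [zero_smul, add_zero]⟩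

lemma rmap_add (u v : Fin (q+1) → ℤ) : rmap q (u + v) = rmap q u + rmap q v := rfl

lemma rmap_jmap (m : Fin q → ℤ) : rmap q (jmap q m) = m := by
  simp [rmap, jmap, Fin.init_snoc]

lemma zmultiples_natAbs (a : ℤ) : zmultiples a = zmultiples ((a.natAbs : ℤ)) := by
  ext b
  rw [Int.mem_zmultiples_iff, Int.mem_zmultiples_iff, Int.natAbs_dvd]

section fiber

variable {n : ℕ} {M : AddSubgroup (Fin q → ℤ)}

lemma s_ne_zero (hn : n ≠ 0) (hM : M.index ∣ n) : M.index ≠ 0 := fun h => hn (by rw [h] at hM; exact Nat.eq_zero_of_zero_dvd hM)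

lemma e_ne_zero (hn : n ≠ 0) (hM : M.index ∣ n) : n / M.index ≠ 0 := by
  intro h
  have := Nat.mul_div_cancel' hM
  rw [h, Nat.mul_zero] at this
  exact hn this.symm

lemma index_mkLat (hn : n ≠ 0) (hM : M.index ∣ n) (x : Fin q → ℤ) :
    (mkLat M x (n / M.index)).index = n := by
  rw [index_eq_comap_mul (map_pmap_mkLat M x (n / M.index)),
    comap_jmap_mkLat (e_ne_zero hn hM), Int.natAbs_natCast]
  exact Nat.mul_div_cancel' hM

lemma map_pmap_fiber (hn : n ≠ 0) (hM : M.index ∣ n) {L : AddSubgroup (Fin (q+1) → ℤ)} (hL : L.index = n)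
    (hLM : L.comap (jmap q) = M) :
    L.map (pmap q) = zmultiples ((n / M.index : ℕ) : ℤ) := by
  obtain ⟨a, ha⟩ := Int.subgroup_cyclic (L.map (pmap q))
  rw [← AddSubgroup.zmultiples_eq_closure] at ha
  have hidx := index_eq_comap_mul ha
  rw [hL, hLM] at hidx
  have hna : a.natAbs = n / M.index := by
    have h1 : M.index * a.natAbs = M.index * (n / M.index) := by
      rw [← hidx, Nat.mul_div_cancel' hM]
    exact Nat.eq_of_mul_eq_mul_left (Nat.pos_of_ne_zero (s_ne_zero hn hM)) h1
  rw [ha, zmultiples_natAbs, hna]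

lemma exists_gen (hn : n ≠ 0) (hM : M.index ∣ n) {L : AddSubgroup (Fin (q+1) → ℤ)} (hL : L.index = n)
    (hLM : L.comap (jmap q) = M) :
    ∃ x, x ∈ L ∧ pmap q x = ((n / M.index : ℕ) : ℤ) := by
  have h : ((n / M.index : ℕ) : ℤ) ∈ L.map (pmap q) := by
    rw [map_pmap_fiber hn hM hL hLM]
    exact AddSubgroup.mem_zmultiples _
  obtain ⟨x, hx, hpx⟩ := h
  exact ⟨x, hx, hpx⟩

/-- The fiber equivalence: subgroups of ℤ^{q+1} of index n lying over M correspond to ℤ^q/M. -/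
noncomputable def fiberEquiv (hn : n ≠ 0) (hM : M.index ∣ n) :
    {L : AddSubgroup (Fin (q+1) → ℤ) // L.index = n ∧ L.comap (jmap q) = M} ≃
      ((Fin q → ℤ) ⧸ M) := by
  classical
  refine
    { toFun := fun L =>
        QuotientAddGroup.mk (rmap q (exists_gen hn hM L.2.1 L.2.2).choose)
      invFun := fun c => ⟨mkLat M (Quotient.out c) (n / M.index),
        index_mkLat hn hM _, comap_jmap_mkLat (e_ne_zero hn hM)⟩
      left_inv := ?_, right_inv := ?_ }
  · rintro ⟨L, hL, hLM⟩
    refine Subtype.ext ?_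
    simp only
    set e := n / M.index with he
    obtain ⟨hx, hpx⟩ := (exists_gen hn hM hL hLM).choose_spec
    set x := (exists_gen hn hM hL hLM).choose
    set y := Quotient.out (QuotientAddGroup.mk (s := M) (rmap q x)) with hy
    have hmem : -(rmap q x) + y ∈ M := by
      rw [← QuotientAddGroup.eq]
      rw [hy, QuotientAddGroup.out_eq']
    set m0 : Fin q → ℤ := -(rmap q x) + y with hm0
    have hym : y = rmap q x + m0 := by rw [hm0]; abel
    have hgen : (Fin.snoc y ((e : ℕ) : ℤ) : Fin (q+1) → ℤ) = x + jmap q m0 := by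
      rw [hym, ← hpx, snoc_eq_add_jmap]
    have hgenL : (Fin.snoc y ((e : ℕ) : ℤ) : Fin (q+1) → ℤ) ∈ L := by
      rw [hgen]
      exact L.add_mem hx (by rw [← hLM] at hmem; exact hmem)
    refine le_antisymm ?_ ?_
    · -- mkLat ≤ L
      unfold mkLat
      refine sup_le ?_ ?_
      · rw [← hLM]; exact AddSubgroup.map_comap_le _ _
      · intro z hz
        obtain ⟨k, rfl⟩ := AddSubgroup.mem_zmultiples_iff.mp hz
        exact L.zsmul_mem hgenL k
    · -- L ≤ mkLat
      intro l hl
      have hpl : pmap q l ∈ zmultiples ((e:ℕ) : ℤ) := by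
        rw [← map_pmap_fiber hn hM hL hLM]
        exact AddSubgroup.mem_map_of_mem _ hl
      obtain ⟨k, hk⟩ := AddSubgroup.mem_zmultiples_iff.mp hpl
      have hdif : pmap q (l - k • (Fin.snoc y ((e:ℕ):ℤ))) = 0 := by
        rw [map_sub, map_zsmul, pmap_snoc, ← hk]
        simp
      have hjr : jmap q (rmap q (l - k • (Fin.snoc y ((e:ℕ):ℤ)))) =
          l - k • (Fin.snoc y ((e:ℕ):ℤ)) := jmap_rmap hdif
      have hrm : rmap q (l - k • (Fin.snoc y ((e:ℕ):ℤ))) ∈ M := by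
        rw [← hLM, AddSubgroup.mem_comap, hjr]
        exact L.sub_mem hl (L.zsmul_mem hgenL k)
      have h1 : l - k • (Fin.snoc y ((e:ℕ):ℤ)) ∈ mkLat M y e := by
        rw [mem_mkLat_iff]
        exact ⟨_, hrm, 0, by rw [zero_smul, add_zero]; exact hjr⟩
      have h2 : k • (Fin.snoc y ((e:ℕ):ℤ)) ∈ mkLat M y e := by
        rw [mem_mkLat_iff]
        exact ⟨0, M.zero_mem, k, by rw [map_zero, zero_add]⟩
      have := (mkLat M y e).add_mem h1 h2
      rwa [sub_add_cancel] at this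
  · intro c
    simp only
    set e := n / M.index with he
    set y := Quotient.out c with hy
    have hcl := exists_gen hn hM (index_mkLat hn hM y) (comap_jmap_mkLat (e_ne_zero hn hM))
    obtain ⟨hx, hpx⟩ := hcl.choose_spec
    set x := hcl.choose
    obtain ⟨m, hm, k, hk⟩ := mem_mkLat_iff.mp hx
    have hklast : ((e:ℕ) : ℤ) = k * e := by
      have := congrArg (pmap q) hk
      rw [map_add, map_zsmul, pmap_snoc, pmap_jmap, zero_add, hpx] at this
      exact this.symm
    have hk1 : k = 1 := by
      have hez : ((e:ℕ):ℤ) ≠ 0 := Int.natCast_ne_zero.mpr (e_ne_zero hn hM)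
      have : (e : ℤ) * k = (e : ℤ) := by rw [mul_comm]; exact hklast.symm
      exact Int.eq_one_of_mul_eq_self_right hez this
    rw [hk1, one_smul] at hk
    have hrx : rmap q x = m + y := by
      rw [← hk, rmap_add, rmap_jmap, rmap_snoc]
    rw [hrx]
    have : QuotientAddGroup.mk (s := M) (m + y) = QuotientAddGroup.mk y := by
      rw [QuotientAddGroup.eq]
      have : -(m + y) + y = -m := by abel
      rw [this]
      exact M.neg_mem hm
    rw [this, hy, QuotientAddGroup.out_eq']

end fiber

lemma card_fiber_eq (q : ℕ) {n : ℕ} (hn : n ≠ 0) {M : AddSubgroup (Fin q → ℤ)}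
    (hM : M.index ∣ n) :
    Nat.card {L : AddSubgroup (Fin (q+1) → ℤ) // L.index = n ∧ L.comap (jmap q) = M} =
      M.index := by
  rw [Nat.card_congr (fiberEquiv hn hM), ← AddSubgroup.index_eq_card]

lemma comap_index_dvd (q : ℕ) {n : ℕ} {L : AddSubgroup (Fin (q+1) → ℤ)}
    (hL : L.index = n) : (L.comap (jmap q)).index ∣ n := by
  obtain ⟨a, ha⟩ := Int.subgroup_cyclic (L.map (pmap q))
  rw [← AddSubgroup.zmultiples_eq_closure] at ha
  have := index_eq_comap_mul ha
  exact ⟨a.natAbs, by rw [← hL, this]⟩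

theorem Nrec (q n : ℕ) (hn : n ≠ 0) :
    Nat.card {L : AddSubgroup (Fin (q+1) → ℤ) // L.index = n} =
      ∑ s ∈ n.divisors, s * Nat.card {M : AddSubgroup (Fin q → ℤ) // M.index = s} := by
  classical
  haveI hfin1 : Finite {L : AddSubgroup (Fin (q+1) → ℤ) // L.index = n} :=
    finite_subgroups_eq hn
  haveI hfin2 : Finite {M : AddSubgroup (Fin q → ℤ) // M.index ∈ n.divisors} := by
    have := finite_subgroups_dvd (q := q) hn
    exact Finite.of_injective
      (fun M : {M : AddSubgroup (Fin q → ℤ) // M.index ∈ n.divisors} =>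
        (⟨M.val, (Nat.mem_divisors.mp M.2).1⟩ : {M : AddSubgroup (Fin q → ℤ) // M.index ∣ n}))
      (fun a b h => Subtype.ext (congrArg (·.val) h))
  haveI : Fintype {M : AddSubgroup (Fin q → ℤ) // M.index ∈ n.divisors} := Fintype.ofFinite _
  set base := {M : AddSubgroup (Fin q → ℤ) // M.index ∈ n.divisors} with hbase
  let f : {L : AddSubgroup (Fin (q+1) → ℤ) // L.index = n} → base := fun L =>
    ⟨L.val.comap (jmap q), Nat.mem_divisors.mpr ⟨comap_index_dvd q L.2, hn⟩⟩
  rw [card_eq_sum_fibers f]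
  have step1 : ∀ b : base,
      Nat.card {L : {L : AddSubgroup (Fin (q+1) → ℤ) // L.index = n} // f L = b} =
        b.val.index := by
    intro b
    have E : {L : {L : AddSubgroup (Fin (q+1) → ℤ) // L.index = n} // f L = b} ≃
        {L : AddSubgroup (Fin (q+1) → ℤ) // L.index = n ∧ L.comap (jmap q) = b.val} :=
      { toFun := fun L => ⟨L.val.val, L.val.2, congrArg Subtype.val L.2⟩
        invFun := fun L => ⟨⟨L.val, L.2.1⟩, Subtype.ext L.2.2⟩
        left_inv := fun L => by ext : 2; rfl
        right_inv := fun L => by ext : 1; rfl }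
    rw [Nat.card_congr E]
    exact card_fiber_eq q hn (Nat.mem_divisors.mp b.2).1
  have hsum1 : ∑ b : base, Nat.card {L // f L = b} = ∑ b : base, b.val.index :=
    Finset.sum_congr rfl (fun b _ => step1 b)
  have hsum2 : ∑ b : base, b.val.index
      = ∑ j : {s // s ∈ n.divisors}, ∑ i : {b : base //
          (⟨b.val.index, b.2⟩ : {s // s ∈ n.divisors}) = j}, i.val.val.index :=
    (Fintype.sum_fiberwise _ _).symm
  have hsum3 : ∀ j : {s // s ∈ n.divisors},
      (∑ i : {b : base // (⟨b.val.index, b.2⟩ : {s // s ∈ n.divisors}) = j}, i.val.val.index)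
        = j.val * Nat.card {M : AddSubgroup (Fin q → ℤ) // M.index = j.val} := by
    intro j
    have hjval : ∀ i : {b : base // (⟨b.val.index, b.2⟩ : {s // s ∈ n.divisors}) = j},
        i.val.val.index = j.val := fun i => congrArg Subtype.val i.2
    rw [Finset.sum_congr rfl (fun i _ => hjval i), Finset.sum_const, smul_eq_mul]
    have E : {b : base // (⟨b.val.index, b.2⟩ : {s // s ∈ n.divisors}) = j} ≃
        {M : AddSubgroup (Fin q → ℤ) // M.index = j.val} :=
      { toFun := fun i => ⟨i.val.val, congrArg Subtype.val i.2⟩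
        invFun := fun M => ⟨⟨M.val, by rw [M.2]; exact j.2⟩, Subtype.ext M.2⟩
        left_inv := fun i => Subtype.ext (Subtype.ext rfl)
        right_inv := fun M => Subtype.ext rfl }
    rw [Finset.card_univ, Fintype.card_eq_nat_card, Nat.card_congr E, mul_comm]
  rw [hsum1, hsum2, Finset.sum_congr rfl (fun j _ => hsum3 j)]
  exact Finset.sum_coe_sort n.divisors
    (fun s => s * Nat.card {M : AddSubgroup (Fin q → ℤ) // M.index = s})

lemma index_of_subsingleton' {G : Type*} [AddGroup G] [Subsingleton G]
    (L : AddSubgroup G) : L.index = 1 := by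
  rw [AddSubgroup.index_eq_card, Nat.card_eq_one_iff_unique]
  refine ⟨⟨fun a b => ?_⟩, inferInstance⟩
  refine QuotientAddGroup.induction_on a (fun x => QuotientAddGroup.induction_on b (fun y => ?_))
  rw [Subsingleton.elim x y]

lemma Nbase (n : ℕ) :
    Nat.card {L : AddSubgroup (Fin 0 → ℤ) // L.index = n} = if n = 1 then 1 else 0 := by
  split_ifs with h
  · subst h
    rw [Nat.card_eq_one_iff_unique]
    refine ⟨⟨fun a b => ?_⟩, ⟨⊥, index_of_subsingleton' ⊥⟩⟩
    refine Subtype.ext ?_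
    apply Subsingleton.elim (α := AddSubgroup (Fin 0 → ℤ))
  · rw [Nat.card_eq_zero]
    refine Or.inl ⟨?_⟩
    rintro ⟨L, hL⟩
    rw [index_of_subsingleton' L] at hL
    exact h hL.symm

/-- the chain-sum function, defined recursively. -/
def Cfun : ℕ → ℕ → ℕ
  | 0, _ => 1
  | (q+1), n => ∑ s ∈ n.divisors, s * Cfun q s

lemma N_eq_C : ∀ q n, n ≠ 0 →
    Nat.card {L : AddSubgroup (Fin (q+1) → ℤ) // L.index = n} = Cfun q n := by
  intro q
  induction q with
  | zero =>
    intro n hn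
    rw [Nrec 0 n hn]
    show _ = 1
    have h1 : ∀ s ∈ n.divisors,
        s * Nat.card {M : AddSubgroup (Fin 0 → ℤ) // M.index = s} =
          if s = 1 then 1 else 0 := by
      intro s hs
      rw [Nbase s]
      split_ifs with h
      · rw [h]
      · rw [Nat.mul_zero]
    rw [Finset.sum_congr rfl h1]
    have := Finset.sum_ite_eq' n.divisors 1 (fun _ => (1 : ℕ))
    simpa [Nat.one_mem_divisors.mpr hn] using this
  | succ q ih =>
    intro n hn
    rw [Nrec (q+1) n hn]
    show _ = ∑ s ∈ n.divisors, s * Cfun q s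
    refine Finset.sum_congr rfl (fun s hs => ?_)
    rw [ih s (Nat.pos_of_mem_divisors hs).ne']

/-- the chain-divisibility sum in the definition of `B`. -/
def B' (q n : ℕ) : ℕ :=
  ∑ s ∈ Finset.filter
      (fun s : Fin q → ℕ =>
        ∀ i : Fin q,
          s i ∣ if h : i.val + 1 < q then s ⟨i.val + 1, h⟩ else n)
      (Fintype.piFinset fun _ => n.divisors),
    ∏ i, s i

lemma chain_dvd {q n : ℕ} {t : Fin (q+1) → ℕ}
    (H : ∀ i : Fin (q+1), t i ∣ (if h : i.val + 1 < q + 1 then t ⟨i.val+1, h⟩ else n)) :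
    ∀ i : Fin (q+1), t i ∣ t (Fin.last q) := by
  have key : ∀ d k (hk : k + d = q), t ⟨k, by omega⟩ ∣ t (Fin.last q) := by
    intro d
    induction d with
    | zero =>
      intro k hk
      have : (⟨k, by omega⟩ : Fin (q+1)) = Fin.last q := Fin.ext (by simp; omega)
      rw [this]
    | succ d ihd =>
      intro k hk
      have h1 : k + 1 < q + 1 := by omega
      have := H ⟨k, by omega⟩
      rw [dif_pos h1] at this
      exact dvd_trans this (ihd (k+1) (by omega))
  intro i
  have : i = ⟨i.val, by omega⟩ := Fin.ext rfl
  rw [this]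
  exact key (q - i.val) i.val (by omega)

lemma B'_zero (n : ℕ) : B' 0 n = 1 := by
  unfold B'
  rw [Finset.filter_true_of_mem (fun _ _ => fun i => i.elim0)]
  simp [Fintype.card_piFinset]

lemma B'_succ (q n : ℕ) (hn : n ≠ 0) : B' (q+1) n = ∑ s ∈ n.divisors, s * B' q s := by
  classical
  unfold B'
  have hrhs : ∀ s ∈ n.divisors, s * ∑ t ∈ Finset.filter
      (fun t : Fin q → ℕ => ∀ i : Fin q, t i ∣ if h : i.val + 1 < q then t ⟨i.val + 1, h⟩ else s)
      (Fintype.piFinset fun _ => s.divisors), ∏ i, t i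
      = ∑ t ∈ Finset.filter
      (fun t : Fin q → ℕ => ∀ i : Fin q, t i ∣ if h : i.val + 1 < q then t ⟨i.val + 1, h⟩ else s)
      (Fintype.piFinset fun _ => s.divisors), s * ∏ i, t i := fun s _ => Finset.mul_sum _ _ _
  have hsig := Finset.sum_sigma' n.divisors
    (fun s => Finset.filter
      (fun t : Fin q → ℕ => ∀ i : Fin q, t i ∣ if h : i.val + 1 < q then t ⟨i.val + 1, h⟩ else s)
      (Fintype.piFinset fun _ => s.divisors))
    (fun s t => s * ∏ i, t i)
  rw [Finset.sum_congr rfl hrhs, hsig]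
  refine Finset.sum_nbij' (fun t => ⟨t (Fin.last q), Fin.init t⟩)
    (fun x => Fin.snoc x.2 x.1) ?_ ?_ ?_ ?_ ?_
  · -- forward membership
    intro t ht
    rw [Finset.mem_filter] at ht
    obtain ⟨hpi, hcond⟩ := ht
    rw [Fintype.mem_piFinset] at hpi
    rw [Finset.mem_sigma]
    refine ⟨hpi (Fin.last q), ?_⟩
    rw [Finset.mem_filter]
    constructor
    · rw [Fintype.mem_piFinset]
      intro i
      rw [Nat.mem_divisors]
      exact ⟨chain_dvd hcond i.castSucc,
        (Nat.pos_of_mem_divisors (hpi (Fin.last q))).ne'⟩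
    · intro i
      dsimp only
      have hscc : (Fin.castSucc i).val + 1 < q + 1 := Nat.succ_lt_succ i.isLt
      have hc := hcond i.castSucc
      rw [dif_pos hscc] at hc
      by_cases h : i.val + 1 < q
      · rw [dif_pos h]
        show t i.castSucc ∣ t (Fin.castSucc ⟨i.val + 1, h⟩)
        have he : (⟨(Fin.castSucc i).val + 1, hscc⟩ : Fin (q+1)) =
            Fin.castSucc ⟨i.val + 1, h⟩ := Fin.ext rfl
        rw [← he]
        exact hc
      · rw [dif_neg h]
        show t i.castSucc ∣ t (Fin.last q)
        have hq : i.val + 1 = q := Nat.le_antisymm i.isLt (Nat.le_of_not_lt h)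
        have he : (⟨(Fin.castSucc i).val + 1, hscc⟩ : Fin (q+1)) = Fin.last q := by
          refine Fin.ext ?_
          rw [Fin.val_last]
          exact hq
        rw [← he]
        exact hc
  · -- backward membership
    rintro ⟨s, t⟩ hx
    rw [Finset.mem_sigma] at hx
    obtain ⟨hs, ht⟩ := hx
    rw [Finset.mem_filter] at ht
    obtain ⟨hpi, hcond⟩ := ht
    rw [Fintype.mem_piFinset] at hpi
    dsimp only at hs hpi hcond ⊢
    rw [Finset.mem_filter]
    constructor
    · rw [Fintype.mem_piFinset]
      intro i
      refine Fin.lastCases ?_ (fun i => ?_) i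
      · rw [Fin.snoc_last]; exact hs
      · rw [Fin.snoc_castSucc]
        have h1 := hpi i
        rw [Nat.mem_divisors] at h1 ⊢
        exact ⟨dvd_trans h1.1 (Nat.mem_divisors.mp hs).1, hn⟩
    · intro i
      refine Fin.lastCases ?_ (fun i => ?_) i
      · have hnl : ¬ ((Fin.last q).val + 1 < q + 1) := by
          rw [Fin.val_last]
          exact Nat.lt_irrefl _
        rw [dif_neg hnl, Fin.snoc_last]
        exact (Nat.mem_divisors.mp hs).1
      · have hscc : (Fin.castSucc i).val + 1 < q + 1 := Nat.succ_lt_succ i.isLt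
        rw [dif_pos hscc, Fin.snoc_castSucc]
        have hc := hcond i
        by_cases h : i.val + 1 < q
        · rw [dif_pos h] at hc
          have he : (⟨(Fin.castSucc i).val + 1, hscc⟩ : Fin (q+1)) =
              Fin.castSucc ⟨i.val + 1, h⟩ := Fin.ext rfl
          rw [he, Fin.snoc_castSucc]
          exact hc
        · rw [dif_neg h] at hc
          have hq : i.val + 1 = q := Nat.le_antisymm i.isLt (Nat.le_of_not_lt h)
          have he : (⟨(Fin.castSucc i).val + 1, hscc⟩ : Fin (q+1)) = Fin.last q := by
            refine Fin.ext ?_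
            rw [Fin.val_last]
            exact hq
          rw [he, Fin.snoc_last]
          exact hc
  · -- left inverse
    intro t _
    exact Fin.snoc_init_self t
  · -- right inverse
    rintro ⟨s, t⟩ _
    refine Sigma.ext ?_ ?_
    · simp [Fin.snoc_last]
    · simp [Fin.init_snoc]
  · -- values
    intro t _
    rw [Fin.prod_univ_castSucc]
    dsimp only
    rw [mul_comm]
    rfl
lemma B'_eq_C : ∀ q n, n ≠ 0 → B' q n = Cfun q n := by
  intro q
  induction q with
  | zero => intro n _; rw [B'_zero]; rfl
  | succ q ih =>
    intro n hn
    rw [B'_succ q n hn]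
    show _ = ∑ s ∈ n.divisors, s * Cfun q s
    exact Finset.sum_congr rfl (fun s hs => by
      rw [ih s (Nat.pos_of_mem_divisors hs).ne'])

section StepA

open Multiplicative

variable {p n : ℕ}

lemma commpow (σ : Fin p → Equiv.Perm (Fin n)) (hc : ∀ i j, Commute (σ i) (σ j))
    (a : Fin p → ℤ) :
    ((Finset.univ : Finset (Fin p)) : Set (Fin p)).Pairwise (Function.onFun Commute (fun i => σ i ^ a i)) :=
  fun i _ j _ _ => (hc i j).zpow_zpow _ _

/-- The homomorphism ℤ^p → Perm(Fin n) induced by a commuting tuple. -/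
noncomputable def phi (σ : Fin p → Equiv.Perm (Fin n)) (hc : ∀ i j, Commute (σ i) (σ j)) :
    Multiplicative (Fin p → ℤ) →* Equiv.Perm (Fin n) :=
  MonoidHom.mk'
    (fun a => Finset.univ.noncommProd (fun i => σ i ^ (toAdd a i)) (commpow σ hc _))
    (by
      intro a b
      have hdis := Finset.noncommProd_mul_distrib (s := Finset.univ)
        (fun i => σ i ^ (toAdd a i)) (fun i => σ i ^ (toAdd b i))
        (commpow σ hc _) (commpow σ hc _)
        (fun i _ j _ _ => (hc i j).zpow_zpow _ _)
      refine Eq.trans ?_ hdis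
      refine Finset.noncommProd_congr rfl (fun x _ => ?_) _
      show σ x ^ (toAdd a x + toAdd b x) = _
      rw [zpow_add]
      rfl)

lemma phi_single (σ : Fin p → Equiv.Perm (Fin n)) (hc : ∀ i j, Commute (σ i) (σ j))
    (i : Fin p) (k : ℤ) :
    phi σ hc (ofAdd (Pi.single i k)) = σ i ^ k := by
  classical
  show Finset.univ.noncommProd (fun j => σ j ^ ((Pi.single i k : Fin p → ℤ) j)) (commpow σ hc _) = σ i ^ k
  have huniv : (Finset.univ : Finset (Fin p)) = insert i (Finset.univ.erase i) :=
    (Finset.insert_erase (Finset.mem_univ i)).symm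
  rw [Finset.noncommProd_congr huniv (fun x _ => rfl) (commpow σ hc _)]
  refine (Finset.noncommProd_insert_of_notMem _ _ _ _ (Finset.notMem_erase i _)).trans ?_
  have h1 : (Finset.univ.erase i).noncommProd (fun j => σ j ^ ((Pi.single i k : Fin p → ℤ) j)) (Set.Pairwise.mono (by simp) (commpow σ hc (Pi.single i k))) = 1 := by
    rw [Finset.noncommProd_eq_pow_card _ _ _ 1 (fun x hx => ?_), one_pow]
    have hne : x ≠ i := Finset.ne_of_mem_erase hx
    have h0 : (Pi.single i k : Fin p → ℤ) x = 0 := by simp [hne]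
    rw [h0, zpow_zero]
  rw [h1, mul_one, Pi.single_eq_same]

lemma hom_ext_single {G : Type*} [Group G]
    (f g : Multiplicative (Fin p → ℤ) →* G)
    (h : ∀ i, f (ofAdd (Pi.single i 1)) = g (ofAdd (Pi.single i 1))) : f = g := by
  classical
  have key : ∀ s : Finset (Fin p), ∀ v : Fin p → ℤ,
      f (ofAdd (∑ i ∈ s, Pi.single i (v i))) = g (ofAdd (∑ i ∈ s, Pi.single i (v i))) := by
    intro s
    induction s using Finset.induction with
    | empty => intro v; simp
    | insert _ _ ha ih =>
      intro v
      rename_i a s'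
      rw [Finset.sum_insert ha]
      have hsplit : ofAdd (Pi.single a (v a) + ∑ i ∈ s', Pi.single i (v i)) =
          ofAdd (Pi.single a (v a)) * ofAdd (∑ i ∈ s', Pi.single i (v i)) := rfl
      rw [hsplit, map_mul, map_mul, ih v]
      congr 1
      have hsm : (Pi.single a (v a) : Fin p → ℤ) = (v a) • (Pi.single a (1 : ℤ) : Fin p → ℤ) := by
        rw [← Pi.single_smul, smul_eq_mul, mul_one]
      rw [hsm, ofAdd_zsmul, map_zpow, map_zpow, h a]
  ext a
  have := key Finset.univ (toAdd a)
  rwa [Finset.univ_sum_single] at this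

lemma phi_mem_closure (σ : Fin p → Equiv.Perm (Fin n)) (hc : ∀ i j, Commute (σ i) (σ j))
    (a : Multiplicative (Fin p → ℤ)) :
    phi σ hc a ∈ Subgroup.closure (Set.range σ) := by
  show Finset.univ.noncommProd (fun i => σ i ^ (toAdd a i)) (commpow σ hc _) ∈ _
  exact Subgroup.noncommProd_mem _ _ (fun i _ =>
    Subgroup.zpow_mem _ (Subgroup.subset_closure (Set.mem_range_self i)) _)

lemma closure_eq_range (σ : Fin p → Equiv.Perm (Fin n)) (hc : ∀ i j, Commute (σ i) (σ j)) :
    Subgroup.closure (Set.range σ) = (phi σ hc).range := by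
  refine le_antisymm ?_ ?_
  · rw [Subgroup.closure_le]
    rintro x ⟨i, rfl⟩
    exact ⟨ofAdd (Pi.single i 1), by rw [phi_single, zpow_one]⟩
  · rintro x ⟨a, rfl⟩
    exact phi_mem_closure σ hc a

lemma mem_orbit_iff_phi (σ : Fin p → Equiv.Perm (Fin n)) (hc : ∀ i j, Commute (σ i) (σ j))
    (x y : Fin n) :
    x ∈ MulAction.orbit (Subgroup.closure (Set.range σ)) y ↔
      ∃ a : Fin p → ℤ, phi σ hc (ofAdd a) y = x := by
  rw [MulAction.mem_orbit_iff]
  constructor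
  · rintro ⟨⟨g, hg⟩, rfl⟩
    rw [closure_eq_range σ hc] at hg
    obtain ⟨a, rfl⟩ := hg
    exact ⟨toAdd a, rfl⟩
  · rintro ⟨a, rfl⟩
    exact ⟨⟨phi σ hc (ofAdd a), phi_mem_closure σ hc _⟩, rfl⟩

lemma card_orbQuot_eq_one_iff (σ : Fin p → Equiv.Perm (Fin n))
    (hc : ∀ i j, Commute (σ i) (σ j)) (hn : 0 < n) :
    Nat.card (MulAction.orbitRel.Quotient (Subgroup.closure (Set.range σ)) (Fin n)) = 1 ↔
      ∀ x y : Fin n, ∃ a : Fin p → ℤ, phi σ hc (ofAdd a) y = x := by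
  rw [Nat.card_eq_one_iff_unique]
  constructor
  · rintro ⟨hsub, -⟩ x y
    have h1 : (Quotient.mk'' x : MulAction.orbitRel.Quotient
        (Subgroup.closure (Set.range σ)) (Fin n)) = Quotient.mk'' y := Subsingleton.elim _ _
    have h2 := Quotient.eq''.mp h1
    rw [MulAction.orbitRel_apply] at h2
    exact (mem_orbit_iff_phi σ hc x y).mp h2
  · intro htr
    refine ⟨⟨fun c d => ?_⟩, ⟨Quotient.mk'' ⟨0, hn⟩⟩⟩
    refine Quotient.inductionOn₂' c d (fun x y => ?_)
    refine Quotient.sound' ?_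
    rw [MulAction.orbitRel_apply]
    exact (mem_orbit_iff_phi σ hc x y).mpr (htr x y)

end StepA

section StepA2

open Multiplicative

variable {p n : ℕ}

/-- stabilizer of a point as an AddSubgroup of ℤ^p -/
def stabZ (σ : Fin p → Equiv.Perm (Fin n)) (hc : ∀ i j, Commute (σ i) (σ j)) (e : Fin n) :
    AddSubgroup (Fin p → ℤ) where
  carrier := {a | phi σ hc (ofAdd a) e = e}
  zero_mem' := by
    show phi σ hc (ofAdd 0) e = e
    have : ofAdd (0 : Fin p → ℤ) = 1 := rfl
    rw [this, map_one]
    rfl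
  add_mem' := by
    intro a b ha hb
    show phi σ hc (ofAdd (a + b)) e = e
    have : ofAdd (a + b) = ofAdd a * ofAdd b := rfl
    rw [this, map_mul, Equiv.Perm.mul_apply, hb, ha]
  neg_mem' := by
    intro a ha
    show phi σ hc (ofAdd (-a)) e = e
    have : ofAdd (-a) = (ofAdd a)⁻¹ := rfl
    rw [this, map_inv]
    conv_lhs => rw [← ha]
    exact Equiv.symm_apply_apply _ _

lemma mem_stabZ_iff {σ : Fin p → Equiv.Perm (Fin n)} {hc : ∀ i j, Commute (σ i) (σ j)}
    {e : Fin n} {a : Fin p → ℤ} :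
    a ∈ stabZ σ hc e ↔ phi σ hc (ofAdd a) e = e := Iff.rfl

/-- the orbit bijection from the quotient by the stabilizer. -/
noncomputable def psiE (σ : Fin p → Equiv.Perm (Fin n)) (hc : ∀ i j, Commute (σ i) (σ j))
    (e : Fin n) (htr : ∀ x y : Fin n, ∃ a : Fin p → ℤ, phi σ hc (ofAdd a) y = x) :
    ((Fin p → ℤ) ⧸ stabZ σ hc e) ≃ Fin n := by
  have wd : ∀ a b : Fin p → ℤ, (QuotientAddGroup.leftRel (stabZ σ hc e)) a b →
      phi σ hc (ofAdd a) e = phi σ hc (ofAdd b) e := by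
    intro a b hab
    rw [QuotientAddGroup.leftRel_apply] at hab
    have hb : b = a + (-a + b) := by abel
    have : ofAdd b = ofAdd a * ofAdd (-a + b) := by
      conv_lhs => rw [hb]
      rfl
    rw [this, map_mul, Equiv.Perm.mul_apply, mem_stabZ_iff.mp hab]
  refine Equiv.ofBijective
    (fun c => Quotient.liftOn' c (fun a => phi σ hc (ofAdd a) e) wd) ⟨?_, ?_⟩
  · intro c d
    refine Quotient.inductionOn₂' c d (fun a b => ?_)
    intro hab
    have hab' : phi σ hc (ofAdd a) e = phi σ hc (ofAdd b) e := hab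
    refine Quotient.sound' ?_
    rw [QuotientAddGroup.leftRel_apply, mem_stabZ_iff]
    have : ofAdd (-a + b) = (ofAdd a)⁻¹ * ofAdd b := rfl
    rw [this, map_mul, map_inv, Equiv.Perm.mul_apply, ← hab']
    exact Equiv.symm_apply_apply _ _
  · intro x
    obtain ⟨a, ha⟩ := htr x e
    exact ⟨Quotient.mk'' a, ha⟩

lemma psiE_mk (σ : Fin p → Equiv.Perm (Fin n)) (hc : ∀ i j, Commute (σ i) (σ j))
    (e : Fin n) (htr : ∀ x y : Fin n, ∃ a : Fin p → ℤ, phi σ hc (ofAdd a) y = x)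
    (a : Fin p → ℤ) :
    psiE σ hc e htr (QuotientAddGroup.mk a) = phi σ hc (ofAdd a) e := rfl

lemma index_stabZ (σ : Fin p → Equiv.Perm (Fin n)) (hc : ∀ i j, Commute (σ i) (σ j))
    (e : Fin n) (htr : ∀ x y : Fin n, ∃ a : Fin p → ℤ, phi σ hc (ofAdd a) y = x) :
    (stabZ σ hc e).index = n := by
  rw [AddSubgroup.index_eq_card, Nat.card_congr (psiE σ hc e htr), Nat.card_eq_fintype_card,
    Fintype.card_fin]

end StepA2

section StepA3

open Multiplicative

variable {p n : ℕ}

/-- the translation homomorphism built from a pointed bijection -/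
noncomputable def tauHom (L : AddSubgroup (Fin p → ℤ)) (ψ : ((Fin p → ℤ) ⧸ L) ≃ Fin n) :
    Multiplicative (Fin p → ℤ) →* Equiv.Perm (Fin n) :=
  MonoidHom.mk'
    (fun a => (ψ.symm.trans (Equiv.addLeft
      ((QuotientAddGroup.mk (toAdd a)) : (Fin p → ℤ) ⧸ L))).trans ψ)
    (by
      intro a b
      refine Equiv.ext (fun x => ?_)
      show ψ (QuotientAddGroup.mk (toAdd a + toAdd b) + ψ.symm x) = _
      rw [Equiv.Perm.mul_apply]
      show _ = ψ (QuotientAddGroup.mk (toAdd a) +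
        ψ.symm (ψ (QuotientAddGroup.mk (toAdd b) + ψ.symm x)))
      rw [Equiv.symm_apply_apply, QuotientAddGroup.mk_add, add_assoc])

lemma tauHom_apply (L : AddSubgroup (Fin p → ℤ)) (ψ : ((Fin p → ℤ) ⧸ L) ≃ Fin n)
    (a : Fin p → ℤ) (x : Fin n) :
    tauHom L ψ (ofAdd a) x = ψ (QuotientAddGroup.mk a + ψ.symm x) := rfl

/-- the commuting tuple built from a pointed bijection -/
noncomputable def sigOf (L : AddSubgroup (Fin p → ℤ)) (ψ : ((Fin p → ℤ) ⧸ L) ≃ Fin n) :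
    Fin p → Equiv.Perm (Fin n) := fun i => tauHom L ψ (ofAdd (Pi.single i 1))

lemma sigOf_commute (L : AddSubgroup (Fin p → ℤ)) (ψ : ((Fin p → ℤ) ⧸ L) ≃ Fin n) :
    ∀ i j, Commute (sigOf L ψ i) (sigOf L ψ j) := fun i j =>
  (Commute.all (ofAdd (Pi.single i 1)) (ofAdd (Pi.single j 1))).map (tauHom L ψ)

lemma phi_sigOf_eq_tauHom (L : AddSubgroup (Fin p → ℤ)) (ψ : ((Fin p → ℤ) ⧸ L) ≃ Fin n) :
    phi (sigOf L ψ) (sigOf_commute L ψ) = tauHom L ψ :=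
  hom_ext_single _ _ (fun i => by rw [phi_single, zpow_one]; rfl)

lemma sigOf_trans (L : AddSubgroup (Fin p → ℤ)) (ψ : ((Fin p → ℤ) ⧸ L) ≃ Fin n) :
    ∀ x y : Fin n, ∃ a : Fin p → ℤ, phi (sigOf L ψ) (sigOf_commute L ψ) (ofAdd a) y = x := by
  intro x y
  refine ⟨Quotient.out (ψ.symm x - ψ.symm y), ?_⟩
  rw [phi_sigOf_eq_tauHom, tauHom_apply, QuotientAddGroup.out_eq', sub_add_cancel,
    Equiv.apply_symm_apply]

lemma stabZ_sigOf (L : AddSubgroup (Fin p → ℤ)) (ψ : ((Fin p → ℤ) ⧸ L) ≃ Fin n)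
    {e : Fin n} (hψ0 : ψ 0 = e) :
    stabZ (sigOf L ψ) (sigOf_commute L ψ) e = L := by
  ext a
  rw [mem_stabZ_iff, phi_sigOf_eq_tauHom, tauHom_apply]
  rw [← hψ0, Equiv.symm_apply_apply, add_zero, Equiv.apply_eq_iff_eq]
  exact QuotientAddGroup.eq_zero_iff a

end StepA3

section StepA4

open Multiplicative

variable {p n : ℕ}

/-- the type of transitive commuting tuples -/
def TT (p n : ℕ) : Type :=
  {σ : Fin p → Equiv.Perm (Fin n) //
    (∀ i j, Commute (σ i) (σ j)) ∧
    Nat.card (MulAction.orbitRel.Quotient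
      (Subgroup.closure (Set.range σ)) (Fin n)) = 1}

lemma psiF_mk (σ : Fin p → Equiv.Perm (Fin n)) (hc : ∀ i j, Commute (σ i) (σ j))
    (e : Fin n) (htr : ∀ x y : Fin n, ∃ a : Fin p → ℤ, phi σ hc (ofAdd a) y = x)
    {L : AddSubgroup (Fin p → ℤ)} (h : L = stabZ σ hc e) (b : Fin p → ℤ) :
    ((QuotientAddGroup.quotientAddEquivOfEq h).toEquiv.trans (psiE σ hc e htr))
        (QuotientAddGroup.mk b) = phi σ hc (ofAdd b) e := by
  rw [Equiv.trans_apply]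
  have h1 : (QuotientAddGroup.quotientAddEquivOfEq h).toEquiv (QuotientAddGroup.mk b) =
      QuotientAddGroup.mk b := QuotientAddGroup.quotientAddEquivOfEq_mk h b
  rw [h1, psiE_mk]

lemma phi_single_mul (σ : Fin p → Equiv.Perm (Fin n)) (hc : ∀ i j, Commute (σ i) (σ j))
    (i : Fin p) (a : Fin p → ℤ) :
    phi σ hc (ofAdd (Pi.single i 1 + a)) = σ i * phi σ hc (ofAdd a) := by
  have h : ofAdd (Pi.single i 1 + a) = ofAdd (Pi.single i 1) * ofAdd a := rfl
  rw [h, map_mul, phi_single, zpow_one]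

/-- fibers of the stabilizer map are pointed bijections -/
noncomputable def EA (hn : 0 < n) (e : Fin n) (Lv : AddSubgroup (Fin p → ℤ)) :
    {σT : TT p n // stabZ σT.1 σT.2.1 e = Lv} ≃
      {ψ : ((Fin p → ℤ) ⧸ Lv) ≃ Fin n // ψ 0 = e} := by
  refine Equiv.ofBijective (fun σT =>
    ⟨(QuotientAddGroup.quotientAddEquivOfEq σT.2.symm).toEquiv.trans
        (psiE σT.1.1 σT.1.2.1 e ((card_orbQuot_eq_one_iff _ _ hn).mp σT.1.2.2)), ?_⟩)
    ⟨?_, ?_⟩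
  · -- pointedness
    have h0 : (0 : (Fin p → ℤ) ⧸ Lv) = QuotientAddGroup.mk 0 := rfl
    rw [h0, psiF_mk]
    have h1 : ofAdd (0 : Fin p → ℤ) = 1 := rfl
    rw [h1, map_one]
    rfl
  · -- injective
    intro s1 s2 h
    have hv := congrArg Subtype.val h
    simp only at hv
    have key : ∀ b : Fin p → ℤ,
        phi s1.1.1 s1.1.2.1 (ofAdd b) e = phi s2.1.1 s2.1.2.1 (ofAdd b) e := by
      intro b
      have h1 := psiF_mk s1.1.1 s1.1.2.1 e
        ((card_orbQuot_eq_one_iff _ _ hn).mp s1.1.2.2) s1.2.symm b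
      have h2 := psiF_mk s2.1.1 s2.1.2.1 e
        ((card_orbQuot_eq_one_iff _ _ hn).mp s2.1.2.2) s2.2.symm b
      rw [← h1, ← h2, hv]
    refine Subtype.ext (Subtype.ext (funext (fun i => Equiv.ext (fun x => ?_))))
    obtain ⟨a, ha⟩ := ((card_orbQuot_eq_one_iff _ _ hn).mp s1.1.2.2) x e
    have hx2 : phi s2.1.1 s2.1.2.1 (ofAdd a) e = x := by rw [← key a]; exact ha
    calc s1.1.1 i x = s1.1.1 i (phi s1.1.1 s1.1.2.1 (ofAdd a) e) := by rw [ha]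
      _ = (s1.1.1 i * phi s1.1.1 s1.1.2.1 (ofAdd a)) e := rfl
      _ = phi s1.1.1 s1.1.2.1 (ofAdd (Pi.single i 1 + a)) e := by rw [phi_single_mul]
      _ = phi s2.1.1 s2.1.2.1 (ofAdd (Pi.single i 1 + a)) e := key _
      _ = (s2.1.1 i * phi s2.1.1 s2.1.2.1 (ofAdd a)) e := by rw [phi_single_mul]
      _ = s2.1.1 i (phi s2.1.1 s2.1.2.1 (ofAdd a) e) := rfl
      _ = s2.1.1 i x := by rw [hx2]
  · -- surjective
    intro ψ
    refine ⟨⟨⟨sigOf Lv ψ.1, sigOf_commute Lv ψ.1,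
      (card_orbQuot_eq_one_iff _ _ hn).mpr (sigOf_trans Lv ψ.1)⟩,
      stabZ_sigOf Lv ψ.1 ψ.2⟩, ?_⟩
    refine Subtype.ext (Equiv.ext (fun c => ?_))
    refine QuotientAddGroup.induction_on c (fun z => ?_)
    have h1 := psiF_mk (sigOf Lv ψ.1) (sigOf_commute Lv ψ.1) e
      ((card_orbQuot_eq_one_iff _ _ hn).mp
        ((card_orbQuot_eq_one_iff _ _ hn).mpr (sigOf_trans Lv ψ.1)))
      (stabZ_sigOf Lv ψ.1 ψ.2).symm z
    refine Eq.trans h1 ?_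
    rw [phi_sigOf_eq_tauHom, tauHom_apply]
    have h2 : ψ.1.symm e = 0 := (Equiv.symm_apply_eq _).mpr ψ.2.symm
    rw [h2, add_zero]

theorem stepA (hn : 0 < n) :
    Nat.card (TT p n) =
    (n - 1).factorial * Nat.card {L : AddSubgroup (Fin p → ℤ) // L.index = n} := by
  classical
  obtain ⟨m, rfl⟩ : ∃ m, n = m + 1 := ⟨n - 1, (Nat.succ_pred_eq_of_pos hn).symm⟩
  set e : Fin (m + 1) := ⟨0, hn⟩ with he
  haveI hSfin : Finite {L : AddSubgroup (Fin p → ℤ) // L.index = m + 1} :=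
    finite_subgroups_eq (Nat.succ_ne_zero m)
  haveI : Fintype {L : AddSubgroup (Fin p → ℤ) // L.index = m + 1} := Fintype.ofFinite _
  haveI : Finite (TT p (m+1)) := by
    unfold TT
    infer_instance
  let f : TT p (m+1) → {L : AddSubgroup (Fin p → ℤ) // L.index = m + 1} := fun σT =>
    ⟨stabZ σT.1 σT.2.1 e, index_stabZ _ _ _
      ((card_orbQuot_eq_one_iff σT.1 σT.2.1 hn).mp σT.2.2)⟩
  rw [card_eq_sum_fibers f]
  have hfib : ∀ L : {L : AddSubgroup (Fin p → ℤ) // L.index = m + 1},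
      Nat.card {σT // f σT = L} = m.factorial := by
    intro L
    have E0 : {σT // f σT = L} ≃ {σT : TT p (m+1) // stabZ σT.1 σT.2.1 e = L.val} :=
      Equiv.subtypeEquivRight (fun σT => by
        constructor
        · intro h; exact congrArg Subtype.val h
        · intro h; exact Subtype.ext h)
    rw [Nat.card_congr (E0.trans (EA hn e L.val))]
    have hQcard : Nat.card ((Fin p → ℤ) ⧸ L.val) = m + 1 := by
      rw [← AddSubgroup.index_eq_card, L.2]
    haveI : Finite ((Fin p → ℤ) ⧸ L.val) :=
      Nat.finite_of_card_ne_zero (by rw [hQcard]; exact Nat.succ_ne_zero m)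
    haveI : Fintype ((Fin p → ℤ) ⧸ L.val) := Fintype.ofFinite _
    have c0 : ((Fin p → ℤ) ⧸ L.val) ≃ Fin (m+1) :=
      Fintype.equivFinOfCardEq (by rw [Fintype.card_eq_nat_card, hQcard])
    have E2 : {ψ : ((Fin p → ℤ) ⧸ L.val) ≃ Fin (m+1) // ψ 0 = e} ≃
        {π : Equiv.Perm (Fin (m+1)) // π (c0 0) = e} :=
      { toFun := fun ψ => ⟨c0.symm.trans ψ.val, by
          rw [Equiv.trans_apply, Equiv.symm_apply_apply]; exact ψ.2⟩
        invFun := fun π => ⟨c0.trans π.val, by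
          rw [Equiv.trans_apply]; exact π.2⟩
        left_inv := fun ψ => by
          refine Subtype.ext (Equiv.ext (fun x => ?_))
          simp
        right_inv := fun π => by
          refine Subtype.ext (Equiv.ext (fun x => ?_))
          simp }
    rw [Nat.card_congr E2, card_perm_fix]
  rw [Finset.sum_congr rfl (fun L _ => hfib L), Finset.sum_const, smul_eq_mul,
    Finset.card_univ, Fintype.card_eq_nat_card, mul_comm]
  simp

end StepA4


/-- `A p n k` is the number of `p`-tuples of pairwise commuting permutations of
`{1,…,n}` whose generated subgroup acts on `{1,…,n}` with exactly `k` orbits. -/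
noncomputable def A (p n k : ℕ) : ℕ :=
  Nat.card {σ : Fin p → Equiv.Perm (Fin n) //
    (∀ i j, Commute (σ i) (σ j)) ∧
    Nat.card (MulAction.orbitRel.Quotient
      (Subgroup.closure (Set.range σ)) (Fin n)) = k}

/-- `B p n = Σ_{s₁ | s₂ | ⋯ | s_{p-1} | n} s₁⋯s_{p-1}`, the sum over `(p-1)`-tuples of
positive integers forming a divisibility chain ending at `n`, of their product. -/
def B (p n : ℕ) : ℕ :=
  ∑ s ∈ Finset.filter
      (fun s : Fin (p - 1) → ℕ =>
        ∀ i : Fin (p - 1),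
          s i ∣ if h : i.val + 1 < p - 1 then s ⟨i.val + 1, h⟩ else n)
      (Fintype.piFinset fun _ => n.divisors),
    ∏ i, s i

theorem stmt7 (p n : ℕ) (hp : 1 ≤ p) (hn : 1 ≤ n) :
    A p n 1 = (n - 1).factorial * B p n := by
  have hn0 : n ≠ 0 := Nat.one_le_iff_ne_zero.mp hn
  have h1 : A p n 1 = Nat.card (TT p n) := rfl
  rw [h1, stepA hn]
  congr 1
  obtain ⟨q, rfl⟩ : ∃ q, p = q + 1 := ⟨p - 1, (Nat.succ_pred_eq_of_pos hp).symm⟩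
  have hB : B (q + 1) n = B' q n := rfl
  rw [hB, B'_eq_C q n hn0, N_eq_C q n hn0]
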